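/- Let λ, μ ∈ ℂ be nonzero. Then G(λ) and G(μ) have the same universal theory if and only if either λ and μ are both transcendental over ℚ, or λ and μ are both algebraic over ℚ and the minimal polynomial of λ over ℚ equals the minimal polynomial of μ over ℚ or the minimal polynomial of μ^{-1} over ℚ. -/

import Mathlib

/-- The semidirect product `R ⋊_u ℤ`: underlying set `R × ℤ` with multiplication
`(r, k) · (r', k') = (r + u^k · r', k + k')`, where `u` is a unit of the commutative ring
`R`. -/
def SDP (R : Type*) [CommRing R] (u : Rˣ) : Type _ := R × ℤ

namespace SDP

variable {R : Type*} [CommRing R] {u : Rˣ}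

instance : Mul (SDP R u) := ⟨fun g h => (g.1 + ((u ^ g.2 : Rˣ) : R) * h.1, g.2 + h.2)⟩
instance : One (SDP R u) := ⟨((0 : R), (0 : ℤ))⟩
instance : Inv (SDP R u) := ⟨fun g => (-(((u ^ (-g.2) : Rˣ) : R) * g.1), -g.2)⟩

theorem mul_def (g h : SDP R u) :
    g * h = (g.1 + ((u ^ g.2 : Rˣ) : R) * h.1, g.2 + h.2) := rfl
theorem one_def : (1 : SDP R u) = ((0 : R), (0 : ℤ)) := rfl
theorem inv_def (g : SDP R u) : g⁻¹ = (-(((u ^ (-g.2) : Rˣ) : R) * g.1), -g.2) := rfl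

instance instGroup : Group (SDP R u) where
  mul_assoc a b c := by
    rw [mul_def, mul_def, mul_def, mul_def]
    refine Prod.ext ?_ ?_
    · show (a.1 + ↑(u ^ a.2) * b.1) + ↑(u ^ (a.2 + b.2)) * c.1
        = a.1 + ↑(u ^ a.2) * (b.1 + ↑(u ^ b.2) * c.1)
      rw [zpow_add]; push_cast; ring
    · show (a.2 + b.2) + c.2 = a.2 + (b.2 + c.2); omega
  one_mul a := by
    rw [mul_def]
    refine Prod.ext ?_ ?_
    · show (0 : R) + ↑(u ^ (0 : ℤ)) * a.1 = a.1; simp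
    · show (0 : ℤ) + a.2 = a.2; omega
  mul_one a := by
    rw [mul_def]
    refine Prod.ext ?_ ?_
    · show a.1 + ↑(u ^ a.2) * (0 : R) = a.1; simp
    · show a.2 + (0 : ℤ) = a.2; omega
  inv_mul_cancel a := by
    rw [mul_def]
    refine Prod.ext ?_ ?_
    · show -(↑(u ^ (-a.2)) * a.1) + ↑(u ^ (-a.2)) * a.1 = (0 : R); simp
    · show -a.2 + a.2 = (0 : ℤ); omega

end SDP
/-- `R_λ = ℤ[λ, λ⁻¹]`, the smallest subring of `ℂ` containing `λ` and `λ⁻¹`. -/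
def Rring (l : ℂ) : Subring ℂ := Subring.closure {l, l⁻¹}

/-- `λ` as a unit of `R_λ` (for `λ ≠ 0`). -/
noncomputable def Runit (l : ℂ) (hl : l ≠ 0) : (Rring l)ˣ where
  val := ⟨l, Subring.subset_closure (by simp)⟩
  inv := ⟨l⁻¹, Subring.subset_closure (by simp)⟩
  val_inv := Subtype.ext (mul_inv_cancel₀ hl)
  inv_val := Subtype.ext (inv_mul_cancel₀ hl)

/-- `G(λ) = R_λ ⋊ ℤ`, where the generator `1 ∈ ℤ` acts by multiplication by `λ`:
the set `R_λ × ℤ` with multiplication `(r, k) · (r', k') = (r + λ^k r', k + k')`. -/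
noncomputable def Gl (l : ℂ) (hl : l ≠ 0) : Type := SDP (Rring l) (Runit l hl)

noncomputable instance (l : ℂ) (hl : l ≠ 0) : Group (Gl l hl) :=
  inferInstanceAs (Group (SDP (Rring l) (Runit l hl)))
/-- Two groups have the same universal theory iff for every `n ≥ 1` and all finite subsets
`E, I` of the free group of rank `n`, there is a homomorphism to the first group killing all
of `E` and killing none of `I` exactly when there is such a homomorphism to the second. -/
def SameUniversalTheory (G H : Type*) [Group G] [Group H] : Prop :=
  ∀ n : ℕ, 1 ≤ n → ∀ E I : Finset (FreeGroup (Fin n)),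
    ((∃ f : FreeGroup (Fin n) →* G, (∀ w ∈ E, f w = 1) ∧ ∀ w ∈ I, f w ≠ 1) ↔
      (∃ f : FreeGroup (Fin n) →* H, (∀ w ∈ E, f w = 1) ∧ ∀ w ∈ I, f w ≠ 1))

/-! ### Auxiliary development -/

namespace SDPAux

open Polynomial

variable {R : Type*} [CommRing R] {u : Rˣ}

/-- Second projection as a homomorphism to `Multiplicative ℤ`. -/
def sndHom (R : Type*) [CommRing R] (u : Rˣ) : SDP R u →* Multiplicative ℤ where
  toFun g := Multiplicative.ofAdd g.2
  map_one' := rfl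
  map_mul' _ _ := rfl

@[simp] theorem sndHom_apply (g : SDP R u) : sndHom R u g = Multiplicative.ofAdd g.2 := rfl

/-- Inclusion of the additive group of `R` as the first factor. -/
def inl (R : Type*) [CommRing R] (u : Rˣ) : Multiplicative R →* SDP R u where
  toFun r := (r.toAdd, 0)
  map_one' := rfl
  map_mul' r s := by
    refine Prod.ext ?_ rfl
    show (r * s).toAdd = r.toAdd + ((u ^ (0:ℤ) : Rˣ) : R) * s.toAdd
    simp [toAdd_mul]

@[simp] theorem inl_apply (r : Multiplicative R) : inl R u r = (r.toAdd, 0) := rfl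

theorem snd_zpow (g : SDP R u) (c : ℤ) : (g ^ c).2 = c * g.2 := by
  have := congrArg Multiplicative.toAdd (map_zpow (sndHom R u) g c)
  simpa [toAdd_zpow] using this

theorem snd_pow (g : SDP R u) (c : ℕ) : (g ^ c).2 = c * g.2 := by
  have h := snd_zpow g (c : ℤ)
  rwa [zpow_natCast] at h

theorem conj_inl (x : SDP R u) (s : R) :
    x * inl R u (Multiplicative.ofAdd s) * x⁻¹ =
      inl R u (Multiplicative.ofAdd (((u ^ x.2 : Rˣ) : R) * s)) := by
  rw [SDP.mul_def, SDP.mul_def, SDP.inv_def]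
  refine Prod.ext ?_ ?_
  · show (x.1 + ((u ^ x.2 : Rˣ) : R) * s) +
      ((u ^ (x.2 + (0:ℤ)) : Rˣ) : R) * (-(((u ^ (-x.2) : Rˣ) : R) * x.1)) =
      ((u ^ x.2 : Rˣ) : R) * s
    rw [add_zero]
    have h : ((u ^ x.2 : Rˣ) : R) * ((u ^ (-x.2) : Rˣ) : R) = 1 := by
      rw [← Units.val_mul, ← zpow_add, add_neg_cancel, zpow_zero, Units.val_one]
    calc x.1 + ((u ^ x.2 : Rˣ) : R) * s + ((u ^ x.2 : Rˣ) : R) * -(((u ^ (-x.2) : Rˣ) : R) * x.1)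
        = ((u ^ x.2 : Rˣ) : R) * s
            + (1 - ((u ^ x.2 : Rˣ) : R) * ((u ^ (-x.2) : Rˣ) : R)) * x.1 := by ring
      _ = ((u ^ x.2 : Rˣ) : R) * s := by rw [h]; ring
  · show (x.2 + (0:ℤ)) + -x.2 = (0:ℤ)
    omega

theorem inl_zpow (s : R) (c : ℤ) :
    (inl R u (Multiplicative.ofAdd s)) ^ c = inl R u (Multiplicative.ofAdd (c • s)) := by
  rw [← map_zpow, ← ofAdd_zsmul]

theorem inl_eq_one_iff (s : R) : inl R u (Multiplicative.ofAdd s) = 1 ↔ s = 0 := by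
  constructor
  · intro h
    have := congrArg Prod.fst h
    exact this
  · rintro rfl; rfl

/-- The word `w_q(X, Y) = ∏_i (X^i Y X^{-i})^{q_i}` associated to an integer polynomial. -/
def wrd (q : Polynomial ℤ) {G : Type*} [Group G] (X Y : G) : G :=
  ((List.range (q.natDegree + 1)).map
    fun i : ℕ => (X ^ (i : ℤ) * Y * X ^ (-(i : ℤ))) ^ q.coeff i).prod

theorem map_wrd {G H : Type*} [Group G] [Group H] (f : G →* H) (q : Polynomial ℤ) (X Y : G) :
    f (wrd q X Y) = wrd q (f X) (f Y) := by
  simp only [wrd, f.map_list_prod, List.map_map, Function.comp_def, map_mul, map_zpow]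

theorem toAdd_list_prod {A : Type*} [AddCommMonoid A] (L : List (Multiplicative A)) :
    L.prod.toAdd = (L.map Multiplicative.toAdd).sum := by
  induction L with
  | nil => rfl
  | cons a L ih => simp [List.prod_cons, ih]

theorem list_range_sum {A : Type*} [AddCommMonoid A] (f : ℕ → A) (n : ℕ) :
    ((List.range n).map f).sum = ∑ i ∈ Finset.range n, f i := by
  induction n with
  | zero => rfl
  | succ n ih =>
      rw [List.range_succ, Finset.sum_range_succ, List.map_append, List.sum_append, ih]
      simp

/-- Value of the word in an abelian group. -/
theorem wrd_comm {G : Type*} [CommGroup G] (q : Polynomial ℤ) (X Y : G) :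
    wrd q X Y = Y ^ (q.eval 1) := by
  rw [wrd]
  have h1 : ∀ i : ℕ, (X ^ (i:ℤ) * Y * X ^ (-(i:ℤ))) ^ q.coeff i = Y ^ q.coeff i := by
    intro i
    congr 1
    rw [mul_comm (X ^ (i:ℤ)) Y, mul_assoc, ← zpow_add, add_neg_cancel, zpow_zero, mul_one]
  simp only [h1]
  have h2 : ∀ n : ℕ, ((List.range n).map fun i => Y ^ q.coeff i).prod
      = Y ^ (∑ i ∈ Finset.range n, q.coeff i) := by
    intro n
    induction n with
    | zero => simp
    | succ n ih =>
        rw [List.range_succ, List.map_append, List.prod_append, ih, Finset.sum_range_succ]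
        simp [zpow_add]
  rw [h2, Polynomial.eval_eq_sum_range]
  simp

/-- Value of the word in `SDP R u` when `Y` lies in the abelian normal subgroup. -/
theorem wrd_inl (q : Polynomial ℤ) (X : SDP R u) (s : R) :
    wrd q X (inl R u (Multiplicative.ofAdd s)) =
      inl R u (Multiplicative.ofAdd (s * aeval ((u ^ X.2 : Rˣ) : R) q)) := by
  have prod_map_inl : ∀ (a : ℕ → R) (n : ℕ),
      ((List.range n).map fun i => inl R u (Multiplicative.ofAdd (a i))).prod
        = inl R u (Multiplicative.ofAdd (∑ i ∈ Finset.range n, a i)) := by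
    intro a n
    induction n with
    | zero =>
        rw [List.range_zero, List.map_nil, List.prod_nil, Finset.range_zero, Finset.sum_empty,
          ofAdd_zero, map_one]
    | succ n ih =>
        rw [List.range_succ, List.map_append, List.prod_append, ih, Finset.sum_range_succ,
          List.map_singleton, List.prod_singleton, ← map_mul, ← ofAdd_add]
  rw [wrd]
  have key : ∀ i : ℕ, (X ^ (i:ℤ) * inl R u (Multiplicative.ofAdd s) * X ^ (-(i:ℤ))) ^ q.coeff i
      = inl R u (Multiplicative.ofAdd (q.coeff i • (((u ^ X.2 : Rˣ) : R) ^ i * s))) := by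
    intro i
    rw [zpow_neg, conj_inl, inl_zpow]
    have h : ((u ^ (X ^ (i:ℤ)).2 : Rˣ) : R) = ((u ^ X.2 : Rˣ) : R) ^ i := by
      rw [snd_zpow, mul_comm (i:ℤ), zpow_mul, zpow_natCast, Units.val_pow_eq_pow_val]
    rw [h]
  simp only [key]
  rw [prod_map_inl]
  congr 2
  rw [aeval_eq_sum_range, Finset.mul_sum]
  apply Finset.sum_congr rfl
  intro i _
  rw [zsmul_eq_mul, zsmul_eq_mul]
  ring

end SDPAux

open scoped commutatorElement

namespace GlAux

open Polynomial SDPAux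

theorem val_runit_zpow (m : ℂ) (hm : m ≠ 0) (k : ℤ) :
    (((Runit m hm ^ k : (Rring m)ˣ) : Rring m) : ℂ) = m ^ k := by
  have h1 : (((Runit m hm ^ k : (Rring m)ˣ) : Rring m) : ℂ)
      = ((Units.map (Rring m).subtype.toMonoidHom (Runit m hm ^ k) : ℂˣ) : ℂ) := rfl
  rw [h1, map_zpow, Units.val_zpow_eq_zpow_val]
  rfl

theorem val_aeval (m : ℂ) (x : Rring m) (q : Polynomial ℤ) :
    ((aeval x q : Rring m) : ℂ) = aeval (x : ℂ) q := by
  have := Polynomial.aeval_algHom_apply ((Rring m).subtype.toIntAlgHom) x q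
  exact this.symm

theorem val_ne_iff {m : ℂ} {x y : Rring m} : x ≠ y ↔ (x : ℂ) ≠ (y : ℂ) := by
  constructor
  · intro h hc; exact h (Subtype.ext hc)
  · intro h hc; exact h (congrArg _ hc)

/-- Solvability of the system `w_q(X,Y) = 1 ∧ [X,Y] ≠ 1` in `G(m)`. -/
theorem sol_iff (m : ℂ) (hm : m ≠ 0) (q : Polynomial ℤ) (hq1 : q.eval 1 ≠ 0) :
    (∃ X Y : Gl m hm, wrd q X Y = 1 ∧ X * Y ≠ Y * X) ↔
      ∃ k : ℤ, m ^ k ≠ 1 ∧ aeval (m ^ k) q = 0 := by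
  show (∃ X Y : SDP (Rring m) (Runit m hm), wrd q X Y = 1 ∧ X * Y ≠ Y * X) ↔ _
  set R := Rring m
  set u := Runit m hm with hu
  constructor
  · rintro ⟨X, Y, hw, hc⟩
    -- second component of Y vanishes
    have h2 : Y.2 = 0 := by
      have h := congrArg (sndHom R u) hw
      rw [map_one, map_wrd, wrd_comm] at h
      have h' := congrArg Multiplicative.toAdd h
      rw [toAdd_zpow] at h'
      simp only [sndHom_apply, toAdd_ofAdd, toAdd_one, smul_eq_mul] at h'
      rcases mul_eq_zero.mp h' with h'' | h''
      · exact absurd h'' hq1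
      · exact h''
    have hY : Y = inl R u (Multiplicative.ofAdd Y.1) := Prod.ext rfl h2
    -- the conjugating unit moves Y.1
    have hne : ((u ^ X.2 : Rˣ) : R) * Y.1 ≠ Y.1 := by
      intro heq
      apply hc
      rw [SDP.mul_def, SDP.mul_def]
      refine Prod.ext ?_ (add_comm _ _)
      show X.1 + ((u ^ X.2 : Rˣ) : R) * Y.1 = Y.1 + ((u ^ Y.2 : Rˣ) : R) * X.1
      rw [heq, h2, zpow_zero, Units.val_one, one_mul, add_comm]
    have hs : Y.1 ≠ 0 := by
      intro h0; apply hne; rw [h0, mul_zero]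
    rw [hY, wrd_inl, inl_eq_one_iff] at hw
    refine ⟨X.2, ?_, ?_⟩
    · intro h1
      apply hne
      have : ((u ^ X.2 : Rˣ) : R) = 1 := by
        apply Subtype.ext
        show (((u ^ X.2 : Rˣ) : R) : ℂ) = 1
        rw [hu, val_runit_zpow m hm X.2, h1]
      rw [this, one_mul]
    · -- cast `hw` to ℂ
      have hC := congrArg (fun x : R => (x : ℂ)) hw
      simp only [Subring.coe_mul, val_aeval] at hC
      rw [hu, val_runit_zpow m hm X.2] at hC
      have hs' : (Y.1 : ℂ) ≠ 0 := val_ne_iff.mp hs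
      rcases mul_eq_zero.mp hC with h | h
      · exact absurd h hs'
      · exact h
  · rintro ⟨k, hk1, hk0⟩
    refine ⟨((0 : R), k), ((1 : R), 0), ?_, ?_⟩
    · have hY : ((1 : R), (0 : ℤ)) = inl R u (Multiplicative.ofAdd (1 : R)) := rfl
      rw [hY]; refine (wrd_inl q _ 1).trans ?_
      have h0 : aeval ((u ^ (((0 : R), k) : SDP R u).2 : Rˣ) : R) q = 0 := by
        apply Subtype.ext
        show ((aeval _ q : R) : ℂ) = 0
        rw [val_aeval]
        have he : ((((u ^ (((0 : R), k) : SDP R u).2 : Rˣ) : R)) : ℂ) = m ^ k := by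
          rw [hu]; exact val_runit_zpow m hm k
        rw [he]
        exact hk0
      rw [h0, mul_zero, ofAdd_zero, map_one]
    · intro heq
      have h1 := congrArg Prod.fst heq
      change (0 : R) + ((u ^ k : Rˣ) : R) * 1 = 1 + ((u ^ (0:ℤ) : Rˣ) : R) * 0 at h1
      -- h1 : 0 + ↑(u ^ k) * 1 = 1 + ↑(u ^ 0) * 0
      apply hk1
      have : ((u ^ k : Rˣ) : R) = 1 := by
        rw [mul_one] at h1
        rw [zero_add] at h1
        rw [h1, zpow_zero, Units.val_one, mul_zero, add_zero]
      have := congrArg (fun x : R => (x : ℂ)) this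
      rw [hu] at this
      rw [val_runit_zpow m hm k] at this
      exact this

theorem eval_word_pair {G : Type*} [Group G] (X Y : G) (w : FreeGroup (Fin 2)) :
    ∃ z : G, ∀ f : FreeGroup (Fin 2) →* G, f (FreeGroup.of 0) = X → f (FreeGroup.of 1) = Y →
      f w = z := by
  refine ⟨FreeGroup.lift (fun i => if i = 0 then X else Y) w, ?_⟩
  intro f h0 h1
  have : f = FreeGroup.lift (fun i => if i = 0 then X else Y) := by
    apply FreeGroup.ext_hom
    intro i
    fin_cases i
    · simpa using h0
    · simpa using h1
  rw [this]

/-- Transfer of solvability of `w_q = 1 ∧ [X,Y] ≠ 1` along same universal theory. -/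
theorem sol_transfer {G H : Type*} [Group G] [Group H] (h : SameUniversalTheory G H)
    (q : Polynomial ℤ) :
    (∃ X Y : G, wrd q X Y = 1 ∧ X * Y ≠ Y * X) →
      ∃ X Y : H, wrd q X Y = 1 ∧ X * Y ≠ Y * X := by
  rintro ⟨X, Y, h1, h2⟩
  have key := h 2 (by norm_num) {wrd q (FreeGroup.of 0) (FreeGroup.of 1)}
    {⁅FreeGroup.of (0 : Fin 2), FreeGroup.of 1⁆}
  have hG : ∃ f : FreeGroup (Fin 2) →* G,
      (∀ w ∈ ({wrd q (FreeGroup.of 0) (FreeGroup.of 1)} :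
        Finset (FreeGroup (Fin 2))), f w = 1) ∧
      ∀ w ∈ ({⁅FreeGroup.of (0 : Fin 2), FreeGroup.of 1⁆} :
        Finset (FreeGroup (Fin 2))), f w ≠ 1 := by
    refine ⟨FreeGroup.lift (fun i => if i = 0 then X else Y), ?_, ?_⟩
    · intro w hw
      rw [Finset.mem_singleton] at hw
      subst hw
      rw [map_wrd]
      simpa using h1
    · intro w hw
      rw [Finset.mem_singleton] at hw
      subst hw
      rw [map_commutatorElement]
      simp only [FreeGroup.lift_apply_of, if_pos, if_neg (by decide : (1 : Fin 2) ≠ 0)]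
      rw [Ne, commutatorElement_eq_one_iff_mul_comm]
      simpa using h2
  obtain ⟨g, hg1, hg2⟩ := key.mp hG
  refine ⟨g (FreeGroup.of 0), g (FreeGroup.of 1), ?_, ?_⟩
  · have := hg1 _ (Finset.mem_singleton_self _)
    rwa [map_wrd] at this
  · have := hg2 _ (Finset.mem_singleton_self _)
    rw [map_commutatorElement, Ne, commutatorElement_eq_one_iff_mul_comm] at this
    exact this

/-- Transfer of nonabelianness along same universal theory. -/
theorem nonab_transfer {G H : Type*} [Group G] [Group H] (h : SameUniversalTheory G H) :
    (∃ X Y : G, X * Y ≠ Y * X) → ∃ X Y : H, X * Y ≠ Y * X := by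
  rintro ⟨X, Y, h2⟩
  have key := h 2 (by norm_num) ∅ {⁅FreeGroup.of (0 : Fin 2), FreeGroup.of 1⁆}
  have hG : ∃ f : FreeGroup (Fin 2) →* G,
      (∀ w ∈ (∅ : Finset (FreeGroup (Fin 2))), f w = 1) ∧
      ∀ w ∈ ({⁅FreeGroup.of (0 : Fin 2), FreeGroup.of 1⁆} :
        Finset (FreeGroup (Fin 2))), f w ≠ 1 := by
    refine ⟨FreeGroup.lift (fun i => if i = 0 then X else Y), by simp, ?_⟩
    intro w hw
    rw [Finset.mem_singleton] at hw
    subst hw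
    rw [map_commutatorElement]
    simp only [FreeGroup.lift_apply_of, if_pos, if_neg (by decide : (1 : Fin 2) ≠ 0)]
    rw [Ne, commutatorElement_eq_one_iff_mul_comm]
    simpa using h2
  obtain ⟨g, _, hg2⟩ := key.mp hG
  refine ⟨g (FreeGroup.of 0), g (FreeGroup.of 1), ?_⟩
  have := hg2 _ (Finset.mem_singleton_self _)
  rw [map_commutatorElement, Ne, commutatorElement_eq_one_iff_mul_comm] at this
  exact this

theorem nonabelian_iff (m : ℂ) (hm : m ≠ 0) :
    (∃ X Y : Gl m hm, X * Y ≠ Y * X) ↔ m ≠ 1 := by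
  show (∃ X Y : SDP (Rring m) (Runit m hm), X * Y ≠ Y * X) ↔ _
  constructor
  · rintro ⟨X, Y, hc⟩
    intro hm1
    apply hc
    have hu : Runit m hm = 1 := by
      apply Units.ext
      apply Subtype.ext
      show m = 1
      exact hm1
    rw [SDP.mul_def, SDP.mul_def, hu]
    refine Prod.ext ?_ (add_comm _ _)
    show X.1 + (((1 : (Rring m)ˣ) ^ X.2 : (Rring m)ˣ) : Rring m) * Y.1
      = Y.1 + (((1 : (Rring m)ˣ) ^ Y.2 : (Rring m)ˣ) : Rring m) * X.1
    rw [one_zpow, one_zpow, Units.val_one, one_mul, one_mul, add_comm]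
  · intro hm1
    refine ⟨((0 : Rring m), 1), ((1 : Rring m), 0), ?_⟩
    intro heq
    have h1 := congrArg Prod.fst heq
    change (0 : Rring m) + ((Runit m hm ^ (1:ℤ) : (Rring m)ˣ) : Rring m) * 1
      = 1 + ((Runit m hm ^ (0:ℤ) : (Rring m)ˣ) : Rring m) * 0 at h1
    apply hm1
    have : ((Runit m hm ^ (1:ℤ) : (Rring m)ˣ) : Rring m) = 1 := by
      rw [mul_one, zero_add] at h1
      rw [h1, zpow_zero, Units.val_one, mul_zero, add_zero]
    have h2 := congrArg (fun x : Rring m => (x : ℂ)) this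
    rw [val_runit_zpow m hm 1] at h2
    rw [zpow_one] at h2
    exact h2

end GlAux

namespace NumAux

open Polynomial

theorem isOfFinOrder_of_zpow_eq_one {α : ℂ} {e : ℤ} (he : e ≠ 0) (h : α ^ e = 1) :
    IsOfFinOrder α := by
  apply isOfFinOrder_iff_pow_eq_one.mpr
  refine ⟨e.natAbs, Int.natAbs_pos.mpr he, ?_⟩
  rcases Int.natAbs_eq e with h' | h'
  · rw [← zpow_natCast, ← h', h]
  · rw [h', zpow_neg] at h
    rw [← zpow_natCast]
    exact inv_eq_one.mp h

theorem isIntegral_zpow {α : ℂ} (hα : IsIntegral ℚ α) (N : ℤ) : IsIntegral ℚ (α ^ N) := by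
  rcases N with n | n
  · rw [Int.ofNat_eq_coe, zpow_natCast]
    exact hα.pow n
  · rw [zpow_negSucc]
    apply isAlgebraic_iff_isIntegral.mp
    apply IsAlgebraic.inv_iff.mpr
    exact (hα.pow (n + 1)).isAlgebraic

/-- If `β` is a root of the minimal polynomial of `α`, then `β^N` is a root of the minimal
polynomial of `α^N`. -/
theorem aeval_zpow_minpoly {α β : ℂ} (hα : IsIntegral ℚ α)
    (hβ : aeval β (minpoly ℚ α) = 0) (N : ℤ) :
    aeval (β ^ N) (minpoly ℚ (α ^ N)) = 0 := by
  haveI : Fact (Irreducible (minpoly ℚ α)) := ⟨minpoly.irreducible hα⟩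
  have hroot : aeval α (minpoly ℚ α) = 0 := minpoly.aeval ℚ α
  let ψα : AdjoinRoot (minpoly ℚ α) →ₐ[ℚ] ℂ := AdjoinRoot.liftAlgHom _ (Algebra.ofId ℚ ℂ) α hroot
  let ψβ : AdjoinRoot (minpoly ℚ α) →ₐ[ℚ] ℂ := AdjoinRoot.liftAlgHom _ (Algebra.ofId ℚ ℂ) β hβ
  have hinj : Function.Injective ψα := ψα.toRingHom.injective
  have key : ψα (aeval (AdjoinRoot.root (minpoly ℚ α) ^ N) (minpoly ℚ (α ^ N))) = 0 := by
    rw [← Polynomial.aeval_algHom_apply, map_zpow₀,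
      show ψα (AdjoinRoot.root _) = α from AdjoinRoot.liftAlgHom_root _ _ _ _]
    exact minpoly.aeval ℚ (α ^ N)
  have hz : aeval (AdjoinRoot.root (minpoly ℚ α) ^ N) (minpoly ℚ (α ^ N)) = 0 :=
    hinj (by rw [key, map_zero])
  have h2 := congrArg ψβ hz
  rw [map_zero, ← Polynomial.aeval_algHom_apply, map_zpow₀,
    show ψβ (AdjoinRoot.root _) = β from AdjoinRoot.liftAlgHom_root _ _ _ _] at h2
  exact h2

/-- If `minpoly α = minpoly (α^N)` with `|N| ≥ 2`, then `α` is a root of unity. -/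
theorem isOfFinOrder_of_minpoly_zpow {α : ℂ} (hα : IsIntegral ℚ α) (hα0 : α ≠ 0) {N : ℤ}
    (hN : 1 < N.natAbs) (h : minpoly ℚ α = minpoly ℚ (α ^ N)) : IsOfFinOrder α := by
  have hp0 : minpoly ℚ α ≠ 0 := minpoly.ne_zero hα
  have hroots : ∀ j : ℕ, aeval (α ^ N ^ j) (minpoly ℚ α) = 0 := by
    intro j
    induction j with
    | zero => simpa using minpoly.aeval ℚ α
    | succ j ih =>
        have h2 := aeval_zpow_minpoly hα ih N
        rw [← h, ← zpow_mul, ← pow_succ] at h2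
        exact h2
  have hfin : ∀ j : ℕ, (α ^ N ^ j) ∈ (minpoly ℚ α).rootSet ℂ := fun j =>
    Polynomial.mem_rootSet.mpr ⟨hp0, hroots j⟩
  obtain ⟨i, j, hij, heq⟩ := Finite.exists_ne_map_eq_of_infinite
    (fun j : ℕ => (⟨α ^ N ^ j, hfin j⟩ : (minpoly ℚ α).rootSet ℂ))
  have heq' : α ^ N ^ i = α ^ N ^ j := congrArg Subtype.val heq
  have hexp : N ^ i ≠ N ^ j := by
    intro hc
    apply hij
    have : N.natAbs ^ i = N.natAbs ^ j := by
      rw [← Int.natAbs_pow, ← Int.natAbs_pow, hc]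
    exact Nat.pow_right_injective hN this
  have he : α ^ (N ^ i - N ^ j) = 1 := by
    rw [zpow_sub₀ hα0, heq', div_self (zpow_ne_zero _ hα0)]
  exact isOfFinOrder_of_zpow_eq_one (sub_ne_zero.mpr hexp) he

/-- The key number-theoretic conclusion. -/
theorem minpoly_conclude {l m : ℂ} (hl0 : l ≠ 0) (hm0 : m ≠ 0) (hli : IsIntegral ℚ l)
    (hmi : IsIntegral ℚ m) {k k' : ℤ} (hk : m ^ k ≠ 1) (hk' : l ^ k' ≠ 1)
    (h1 : aeval (m ^ k) (minpoly ℚ l) = 0) (h2 : aeval (l ^ k') (minpoly ℚ m) = 0) :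
    minpoly ℚ l = minpoly ℚ m ∨ minpoly ℚ l = minpoly ℚ m⁻¹ := by
  have hk0 : k ≠ 0 := by rintro rfl; exact hk (by simp)
  have hk'0 : k' ≠ 0 := by rintro rfl; exact hk' (by simp)
  have e1 : minpoly ℚ l = minpoly ℚ (m ^ k) :=
    minpoly.eq_of_irreducible_of_monic (minpoly.irreducible hli) h1 (minpoly.monic hli)
  have e2 : minpoly ℚ m = minpoly ℚ (l ^ k') :=
    minpoly.eq_of_irreducible_of_monic (minpoly.irreducible hmi) h2 (minpoly.monic hmi)
  by_cases hfin : IsOfFinOrder l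
  · -- root of unity case
    left
    have hNpos : 0 < orderOf l := hfin.orderOf_pos
    have hprim : IsPrimitiveRoot l (orderOf l) := IsPrimitiveRoot.orderOf l
    haveI : NeZero ((orderOf l : ℕ) : ℂ) := ⟨Nat.cast_ne_zero.mpr hNpos.ne'⟩
    have hcy : cyclotomic (orderOf l) ℚ = minpoly ℚ l := cyclotomic_eq_minpoly_rat hprim hNpos
    have hmk : IsPrimitiveRoot (m ^ k) (orderOf l) := by
      have hh : aeval (m ^ k) (cyclotomic (orderOf l) ℚ) = 0 := by rw [hcy]; exact h1
      rw [Polynomial.aeval_def, ← Polynomial.eval_map, map_cyclotomic] at hh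
      exact (Polynomial.isRoot_cyclotomic_iff).mp hh
    have hmfo : IsOfFinOrder m := by
      have h4 : m ^ (k * (orderOf l : ℤ)) = 1 := by
        rw [zpow_mul, zpow_natCast]
        exact hmk.pow_eq_one
      exact isOfFinOrder_of_zpow_eq_one
        (mul_ne_zero hk0 (Int.natCast_ne_zero.mpr hNpos.ne')) h4
    have hMpos : 0 < orderOf m := hmfo.orderOf_pos
    have hprim' : IsPrimitiveRoot m (orderOf m) := IsPrimitiveRoot.orderOf m
    haveI : NeZero ((orderOf m : ℕ) : ℂ) := ⟨Nat.cast_ne_zero.mpr hMpos.ne'⟩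
    have hcy' : cyclotomic (orderOf m) ℚ = minpoly ℚ m := cyclotomic_eq_minpoly_rat hprim' hMpos
    have hlk' : IsPrimitiveRoot (l ^ k') (orderOf m) := by
      have hh : aeval (l ^ k') (cyclotomic (orderOf m) ℚ) = 0 := by rw [hcy']; exact h2
      rw [Polynomial.aeval_def, ← Polynomial.eval_map, map_cyclotomic] at hh
      exact (Polynomial.isRoot_cyclotomic_iff).mp hh
    have hMN : orderOf m ∣ orderOf l := by
      rw [hlk'.eq_orderOf]
      apply orderOf_dvd_of_pow_eq_one
      rw [← zpow_natCast (l ^ k'), ← zpow_mul, mul_comm, zpow_mul, zpow_natCast,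
        pow_orderOf_eq_one, one_zpow]
    have hNM : orderOf l ∣ orderOf m := by
      rw [hmk.eq_orderOf]
      apply orderOf_dvd_of_pow_eq_one
      rw [← zpow_natCast (m ^ k), ← zpow_mul, mul_comm, zpow_mul, zpow_natCast,
        pow_orderOf_eq_one, one_zpow]
    rw [← hcy, ← hcy', Nat.dvd_antisymm hNM hMN]
  · -- not a root of unity: |k k'| = 1
    have hm_root : aeval m (minpoly ℚ (l ^ k')) = 0 := by
      rw [← e2]; exact minpoly.aeval ℚ m
    have hlk'i : IsIntegral ℚ (l ^ k') := isIntegral_zpow hli k'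
    have h3 : aeval (m ^ k) (minpoly ℚ ((l ^ k') ^ k)) = 0 := aeval_zpow_minpoly hlk'i hm_root k
    rw [← zpow_mul] at h3
    have hlkk'i : IsIntegral ℚ (l ^ (k' * k)) := isIntegral_zpow hli _
    have e3 : minpoly ℚ (l ^ (k' * k)) = minpoly ℚ (m ^ k) :=
      minpoly.eq_of_irreducible_of_monic (minpoly.irreducible hlkk'i) h3 (minpoly.monic hlkk'i)
    have e4 : minpoly ℚ l = minpoly ℚ (l ^ (k' * k)) := by rw [e1, ← e3]
    have habs : (k' * k).natAbs = 1 := by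
      by_contra hne
      have hzero : (k' * k) ≠ 0 := mul_ne_zero hk'0 hk0
      have h1lt : 1 < (k' * k).natAbs := by
        have := Int.natAbs_pos.mpr hzero
        omega
      exact hfin (isOfFinOrder_of_minpoly_zpow hli hl0 h1lt e4)
    have hk1 : k = 1 ∨ k = -1 := by
      have h5 : k'.natAbs * k.natAbs = 1 := by rw [← Int.natAbs_mul]; exact habs
      have h6 : k.natAbs = 1 := Nat.eq_one_of_mul_eq_one_left h5
      rcases Int.natAbs_eq k with h' | h' <;> rw [h6] at h' <;> [left; right] <;> exact_mod_cast h'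
    rcases hk1 with rfl | rfl
    · left; rw [e1, zpow_one]
    · right; rw [e1]; congr 1; exact zpow_neg_one m

end NumAux

namespace RingAux

open Polynomial LaurentPolynomial

/-- Evaluation of integer Laurent polynomials at a nonzero complex number. -/
noncomputable def lev (l : ℂ) (hl : l ≠ 0) : LaurentPolynomial ℤ →ₐ[ℤ] ℂ :=
  AddMonoidAlgebra.lift ℤ ℂ ℤ ((Units.coeHom ℂ).comp (zpowersHom ℂˣ (Units.mk0 l hl)))

theorem lev_T (l : ℂ) (hl : l ≠ 0) (n : ℤ) : lev l hl (T n) = l ^ n := by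
  rw [T, lev, AddMonoidAlgebra.lift_single]
  show (1 : ℤ) • ((Units.mk0 l hl ^ n : ℂˣ) : ℂ) = l ^ n
  rw [one_smul, Units.val_zpow_eq_zpow_val, Units.val_mk0]

theorem zpow_mem_Rring (l : ℂ) (n : ℤ) : l ^ n ∈ Rring l := by
  rcases n with n | n
  · rw [Int.ofNat_eq_coe, zpow_natCast]
    exact pow_mem (Subring.subset_closure (by simp)) n
  · rw [zpow_negSucc, ← inv_pow]
    exact pow_mem (Subring.subset_closure (by simp)) (n + 1)

theorem lev_mem (l : ℂ) (hl : l ≠ 0) (F : LaurentPolynomial ℤ) : lev l hl F ∈ Rring l := by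
  induction F using AddMonoidAlgebra.induction with
  | zero => rw [map_zero]; exact zero_mem _
  | single_add a b f _ _ ih =>
      rw [map_add]
      refine add_mem ?_ ih
      have h1 : lev l hl (AddMonoidAlgebra.single a b) = b • (((Units.mk0 l hl) ^ a : ℂˣ) : ℂ) := by
        rw [lev, AddMonoidAlgebra.lift_single]
        rfl
      rw [h1, Units.val_zpow_eq_zpow_val, Units.val_mk0, zsmul_eq_mul]
      exact mul_mem (intCast_mem _ b) (zpow_mem_Rring l a)

/-- Evaluation as a ring homomorphism onto `Rring l`. -/
noncomputable def levr (l : ℂ) (hl : l ≠ 0) : LaurentPolynomial ℤ →+* Rring l :=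
  RingHom.codRestrict (lev l hl).toRingHom (Rring l) (lev_mem l hl)

theorem levr_val (l : ℂ) (hl : l ≠ 0) (F : LaurentPolynomial ℤ) :
    ((levr l hl F : Rring l) : ℂ) = lev l hl F := rfl

theorem levr_eq_zero_iff (l : ℂ) (hl : l ≠ 0) (F : LaurentPolynomial ℤ) :
    levr l hl F = 0 ↔ lev l hl F = 0 := by
  rw [← Subtype.coe_inj, levr_val]
  rfl

theorem levr_surjective (l : ℂ) (hl : l ≠ 0) : Function.Surjective (levr l hl) := by
  intro x
  have hle : Rring l ≤ ((lev l hl).toRingHom.range) := by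
    apply Subring.closure_le.mpr
    rintro z hz
    simp only [Set.mem_insert_iff, Set.mem_singleton_iff] at hz
    rcases hz with hz | hz
    · exact RingHom.mem_range.mpr ⟨T 1,
        by rw [show (lev l hl).toRingHom (T 1) = lev l hl (T 1) from rfl, lev_T, zpow_one, hz]⟩
    · exact RingHom.mem_range.mpr ⟨T (-1),
        by rw [show (lev l hl).toRingHom (T (-1)) = lev l hl (T (-1)) from rfl, lev_T,
          zpow_neg_one, hz]⟩
  obtain ⟨F, hF⟩ := RingHom.mem_range.mp (hle x.2)
  exact ⟨F, Subtype.ext hF⟩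

theorem lev_toLaurent (l : ℂ) (hl : l ≠ 0) (f : Polynomial ℤ) :
    lev l hl (f.toLaurent) = aeval l f := by
  have h : (lev l hl).comp Polynomial.toLaurentAlg = aeval l := by
    apply Polynomial.algHom_ext
    rw [AlgHom.comp_apply, Polynomial.toLaurentAlg_apply, Polynomial.toLaurent_X, lev_T,
      zpow_one, aeval_X]
  have := congrArg (fun g : Polynomial ℤ →ₐ[ℤ] ℂ => g f) h
  simpa [Polynomial.toLaurentAlg_apply] using this

theorem lev_eq_zero_iff_aeval (l : ℂ) (hl : l ≠ 0) (F : LaurentPolynomial ℤ) (n : ℕ)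
    (f : Polynomial ℤ) (hf : f.toLaurent = F * T n) :
    (lev l hl F = 0 ↔ aeval l f = 0) := by
  have h1 : aeval l f = lev l hl F * l ^ (n : ℤ) := by
    rw [← lev_toLaurent, hf, map_mul, lev_T]
  rw [h1]
  constructor
  · intro h; rw [h, zero_mul]
  · intro h
    rcases mul_eq_zero.mp h with h' | h'
    · exact h'
    · exact absurd h' (zpow_ne_zero _ hl)

/-- Kernel equality under the arithmetic hypotheses. -/
theorem lev_ker_eq (l m : ℂ) (hl : l ≠ 0) (hm : m ≠ 0)
    (H : (Transcendental ℚ l ∧ Transcendental ℚ m) ∨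
      (IsIntegral ℚ l ∧ IsIntegral ℚ m ∧ minpoly ℚ l = minpoly ℚ m))
    (F : LaurentPolynomial ℤ) : lev l hl F = 0 ↔ lev m hm F = 0 := by
  obtain ⟨n, f, hf⟩ := F.exists_T_pow
  rw [lev_eq_zero_iff_aeval l hl F n f hf, lev_eq_zero_iff_aeval m hm F n f hf]
  have key : ∀ (x : ℂ), aeval x f = 0 ↔ aeval x (f.map (algebraMap ℤ ℚ)) = 0 := by
    intro x
    rw [Polynomial.aeval_map_algebraMap]
  rw [key l, key m]
  set g := f.map (algebraMap ℤ ℚ) with hg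
  rcases H with ⟨htl, htm⟩ | ⟨hil, him, hmin⟩
  · constructor
    · intro h
      by_cases hg0 : g = 0
      · rw [hg0, map_zero]
      · exact absurd ⟨g, hg0, h⟩ htl
    · intro h
      by_cases hg0 : g = 0
      · rw [hg0, map_zero]
      · exact absurd ⟨g, hg0, h⟩ htm
  · have dvd_iff : ∀ (x : ℂ), IsIntegral ℚ x → (aeval x g = 0 ↔ minpoly ℚ x ∣ g) := by
      intro x hx
      constructor
      · exact minpoly.dvd ℚ x
      · intro hdvd
        obtain ⟨c, hc⟩ := hdvd
        rw [hc, map_mul, minpoly.aeval, zero_mul]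
    rw [dvd_iff l hil, dvd_iff m him, hmin]

/-- One direction of the induced homomorphism. -/
noncomputable def rhom (l m : ℂ) (hl : l ≠ 0) (hm : m ≠ 0)
    (H1 : ∀ a ∈ RingHom.ker (levr l hl), levr m hm a = 0) : Rring l →+* Rring m :=
  (Ideal.Quotient.lift _ (levr m hm) H1).comp
    ((RingHom.quotientKerEquivOfSurjective (levr_surjective l hl)).symm :
      Rring l ≃+* _).toRingHom

theorem rhom_levr (l m : ℂ) (hl : l ≠ 0) (hm : m ≠ 0)
    (H1 : ∀ a ∈ RingHom.ker (levr l hl), levr m hm a = 0) (F : LaurentPolynomial ℤ) :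
    rhom l m hl hm H1 (levr l hl F) = levr m hm F := by
  have h1 : (RingHom.quotientKerEquivOfSurjective (levr_surjective l hl)).symm (levr l hl F)
      = Ideal.Quotient.mk _ F := by
    apply (RingHom.quotientKerEquivOfSurjective (levr_surjective l hl)).injective
    rw [RingEquiv.apply_symm_apply]
    exact (RingHom.kerLift_mk (levr l hl) F).symm
  show (Ideal.Quotient.lift _ (levr m hm) H1)
    ((RingHom.quotientKerEquivOfSurjective (levr_surjective l hl)).symm (levr l hl F)) = _
  rw [h1, Ideal.Quotient.lift_mk]

theorem ker_le_of_iff (l m : ℂ) (hl : l ≠ 0) (hm : m ≠ 0)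
    (H : ∀ F, lev l hl F = 0 ↔ lev m hm F = 0) :
    ∀ a ∈ RingHom.ker (levr l hl), levr m hm a = 0 := by
  intro a ha
  rw [RingHom.mem_ker, levr_eq_zero_iff] at ha
  rw [levr_eq_zero_iff]
  exact (H a).mp ha

/-- The isomorphism `Rring l ≃+* Rring m` induced by kernel equality, sending `l` to `m`. -/
noncomputable def rringEquiv (l m : ℂ) (hl : l ≠ 0) (hm : m ≠ 0)
    (H : ∀ F, lev l hl F = 0 ↔ lev m hm F = 0) : Rring l ≃+* Rring m :=
  RingEquiv.ofBijective (rhom l m hl hm (ker_le_of_iff l m hl hm H))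
    ⟨by
      intro x y hxy
      obtain ⟨F, rfl⟩ := levr_surjective l hl x
      obtain ⟨G, rfl⟩ := levr_surjective l hl y
      rw [rhom_levr, rhom_levr] at hxy
      have h0 : levr m hm (F - G) = 0 := by rw [map_sub, hxy, sub_self]
      rw [levr_eq_zero_iff] at h0
      have h2 := (H (F - G)).mpr h0
      rw [← levr_eq_zero_iff l hl, map_sub, sub_eq_zero] at h2
      exact h2,
     by
      intro y
      obtain ⟨F, rfl⟩ := levr_surjective m hm y
      exact ⟨levr l hl F, rhom_levr l m hl hm (ker_le_of_iff l m hl hm H) F⟩⟩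

theorem rringEquiv_levr (l m : ℂ) (hl : l ≠ 0) (hm : m ≠ 0)
    (H : ∀ F, lev l hl F = 0 ↔ lev m hm F = 0) (F : LaurentPolynomial ℤ) :
    rringEquiv l m hl hm H (levr l hl F) = levr m hm F :=
  rhom_levr l m hl hm (ker_le_of_iff l m hl hm H) F

theorem rringEquiv_runit (l m : ℂ) (hl : l ≠ 0) (hm : m ≠ 0)
    (H : ∀ F, lev l hl F = 0 ↔ lev m hm F = 0) :
    rringEquiv l m hl hm H ((Runit l hl : (Rring l)ˣ) : Rring l)
      = ((Runit m hm : (Rring m)ˣ) : Rring m) := by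
  have h1 : ∀ l' (hl' : l' ≠ 0), ((Runit l' hl' : (Rring l')ˣ) : Rring l') = levr l' hl' (T 1) := by
    intro l' hl'
    apply Subtype.ext
    show l' = lev l' hl' (T 1)
    rw [lev_T, zpow_one]
  rw [h1 l hl, rringEquiv_levr, h1 m hm]

end RingAux

namespace GrpAux

/-- A ring isomorphism matching the units induces an isomorphism of the semidirect products. -/
def sdpCongr {R S : Type*} [CommRing R] [CommRing S] {u : Rˣ} {v : Sˣ} (e : R ≃+* S)
    (h : e ((u : R)) = (v : S)) : SDP R u ≃* SDP S v where
  toFun g := (e g.1, g.2)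
  invFun g := (e.symm g.1, g.2)
  left_inv g := by refine Prod.ext ?_ rfl; exact e.symm_apply_apply g.1
  right_inv g := by refine Prod.ext ?_ rfl; exact e.apply_symm_apply g.1
  map_mul' g h' := by
    have key : ∀ k : ℤ, e (((u ^ k : Rˣ) : R)) = ((v ^ k : Sˣ) : S) := by
      intro k
      have hu : Units.map (e : R →+* S).toMonoidHom u = v := Units.ext h
      have h2 : ((v ^ k : Sˣ) : S) = ((Units.map (e : R →+* S).toMonoidHom (u ^ k) : Sˣ) : S) := by
        rw [map_zpow, hu]
      rw [h2]
      rfl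
    refine Prod.ext ?_ rfl
    show e ((g * h').1) = e g.1 + ((v ^ g.2 : Sˣ) : S) * e h'.1
    rw [SDP.mul_def]
    show e (g.1 + ((u ^ g.2 : Rˣ) : R) * h'.1) = _
    rw [map_add, map_mul, key]

/-- Inverting the unit amounts to flipping the `ℤ`-coordinate. -/
def sdpFlip (R : Type*) [CommRing R] (u : Rˣ) : SDP R u ≃* SDP R u⁻¹ where
  toFun g := (g.1, -g.2)
  invFun g := (g.1, -g.2)
  left_inv g := Prod.ext rfl (neg_neg g.2)
  right_inv g := Prod.ext rfl (neg_neg g.2)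
  map_mul' g h' := by
    refine Prod.ext ?_ (neg_add g.2 h'.2)
    show (g * h').1 = g.1 + (((u⁻¹ : Rˣ) ^ (-g.2) : Rˣ) : R) * h'.1
    rw [SDP.mul_def]
    show g.1 + ((u ^ g.2 : Rˣ) : R) * h'.1 = _
    rw [inv_zpow, zpow_neg, inv_inv]

/-- Isomorphic groups have the same universal theory. -/
theorem sut_of_mulEquiv {G H : Type*} [Group G] [Group H] (e : G ≃* H) :
    SameUniversalTheory G H := by
  intro n _ E I
  constructor
  · rintro ⟨f, h1, h2⟩
    refine ⟨e.toMonoidHom.comp f, fun w hw => ?_, fun w hw => ?_⟩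
    · show e (f w) = 1
      rw [h1 w hw, map_one]
    · intro hc
      apply h2 w hw
      apply e.injective
      rw [map_one]
      exact hc
  · rintro ⟨f, h1, h2⟩
    refine ⟨e.symm.toMonoidHom.comp f, fun w hw => ?_, fun w hw => ?_⟩
    · show e.symm (f w) = 1
      rw [h1 w hw, map_one]
    · intro hc
      apply h2 w hw
      apply e.symm.injective
      rw [map_one]
      exact hc

theorem sut_symm {G H : Type*} [Group G] [Group H] (h : SameUniversalTheory G H) :
    SameUniversalTheory H G := fun n hn E I => (h n hn E I).symm

/-- `G(m) ≅ G(m⁻¹)`. -/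
noncomputable def glFlipEquiv (m : ℂ) (hm : m ≠ 0) :
    Gl m hm ≃* Gl m⁻¹ (inv_ne_zero hm) := by
  have hR : Rring m = Rring m⁻¹ := by
    unfold Rring
    rw [inv_inv, Set.pair_comm]
  refine MulEquiv.trans (sdpFlip (Rring m) (Runit m hm) :
    SDP (Rring m) (Runit m hm) ≃* SDP (Rring m) (Runit m hm)⁻¹) ?_
  exact sdpCongr (RingEquiv.subringCongr hR) (Subtype.ext rfl)

end GrpAux

namespace MainAux

open Polynomial SDPAux GlAux

theorem alg_of_zpow {x : ℂ} {k : ℤ} (hk : k ≠ 0) (h : IsAlgebraic ℚ (x ^ k)) :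
    IsAlgebraic ℚ x := by
  rcases k with n | n
  · rw [Int.ofNat_eq_coe, zpow_natCast] at h
    have hn : 0 < n := Nat.pos_of_ne_zero (fun h0 => hk (by simp [h0]))
    exact (IsIntegral.of_pow hn (isAlgebraic_iff_isIntegral.mp h)).isAlgebraic
  · rw [zpow_negSucc] at h
    exact (IsIntegral.of_pow (Nat.succ_pos n)
      (isAlgebraic_iff_isIntegral.mp (IsAlgebraic.inv_iff.mp h))).isAlgebraic

/-- Key step: if `a` is algebraic (and `≠ 1`), the same universal theory forces a power of `b`
to be a root of the minimal polynomial of `a`. -/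
theorem alg_step (a b : ℂ) (ha : a ≠ 0) (hb : b ≠ 0) (ha1 : a ≠ 1)
    (hsut : SameUniversalTheory (Gl a ha) (Gl b hb)) (halg : IsAlgebraic ℚ a) :
    ∃ k : ℤ, b ^ k ≠ 1 ∧ aeval (b ^ k) (minpoly ℚ a) = 0 := by
  have hai : IsIntegral ℚ a := isAlgebraic_iff_isIntegral.mp halg
  set q := IsLocalization.integerNormalization (nonZeroDivisors ℤ) (minpoly ℚ a) with hq
  obtain ⟨c, hc⟩ :=
    IsLocalization.integerNormalization_map_to_map (nonZeroDivisors ℤ) (minpoly ℚ a)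
  have hc0 : ((c : ℤ) : ℚ) ≠ 0 := Int.cast_ne_zero.mpr (nonZeroDivisors.coe_ne_zero c)
  have heval1 : ∀ x : ℂ, aeval x q = ((c : ℤ) : ℂ) * aeval x (minpoly ℚ a) := by
    intro x
    have h1 : aeval x q = aeval x (q.map (algebraMap ℤ ℚ)) :=
      (Polynomial.aeval_map_algebraMap ℚ x q).symm
    rw [h1, hc, zsmul_eq_mul, map_mul]
    congr 1
    rw [map_intCast]
  have hq1 : q.eval 1 ≠ 0 := by
    intro h0
    -- then 1 would be a root of the minimal polynomial of a, forcing a = 1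
    have h1 : ((q.eval 1 : ℤ) : ℚ) = 0 := by rw [h0]; exact Int.cast_zero
    have h2 : (q.map (algebraMap ℤ ℚ)).eval 1 = 0 := by
      rw [Polynomial.eval_one_map]
      simpa using h1
    rw [hc] at h2
    rw [zsmul_eq_mul, Polynomial.eval_mul, Polynomial.eval_intCast] at h2
    have h3 : (minpoly ℚ a).eval 1 = 0 := by
      rcases mul_eq_zero.mp h2 with h' | h'
      · exact absurd h' hc0
      · exact h'
    have h4 : aeval (1 : ℂ) (minpoly ℚ a) = 0 := by
      rw [Polynomial.aeval_def, Polynomial.eval₂_at_one, h3, map_zero]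
    have h5 : minpoly ℚ a = minpoly ℚ (1 : ℂ) :=
      minpoly.eq_of_irreducible_of_monic (minpoly.irreducible hai) h4 (minpoly.monic hai)
    have h6 : minpoly ℚ (1 : ℂ) = X - C 1 := by
      have := minpoly.eq_X_sub_C ℂ (1 : ℚ)
      simpa using this
    have h7 : aeval a (minpoly ℚ a) = 0 := minpoly.aeval _ _
    rw [h5, h6] at h7
    simp only [map_sub, aeval_X, aeval_C, map_one] at h7
    exact ha1 (sub_eq_zero.mp h7)
  have hqa : aeval a q = 0 :=
    IsLocalization.integerNormalization_aeval_eq_zero _ _ (minpoly.aeval ℚ a)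
  have hsol : ∃ X Y : Gl a ha, wrd q X Y = 1 ∧ X * Y ≠ Y * X := by
    rw [sol_iff a ha q hq1]
    refine ⟨1, ?_, ?_⟩
    · rw [zpow_one]; exact ha1
    · rw [zpow_one]; exact hqa
  have hsol' := sol_transfer hsut q hsol
  rw [sol_iff b hb q hq1] at hsol'
  obtain ⟨k, hk1, hk0⟩ := hsol'
  refine ⟨k, hk1, ?_⟩
  rw [heval1] at hk0
  rcases mul_eq_zero.mp hk0 with h' | h'
  · exact absurd h' (by exact_mod_cast Int.cast_ne_zero.mpr (nonZeroDivisors.coe_ne_zero c))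
  · exact h'

theorem forward (l m : ℂ) (hl : l ≠ 0) (hm : m ≠ 0)
    (h : SameUniversalTheory (Gl l hl) (Gl m hm)) :
    (Transcendental ℚ l ∧ Transcendental ℚ m) ∨
      (IsAlgebraic ℚ l ∧ IsAlgebraic ℚ m ∧
        (minpoly ℚ l = minpoly ℚ m ∨ minpoly ℚ l = minpoly ℚ m⁻¹)) := by
  by_cases hl1 : l = 1
  · -- then G(l) is abelian, so G(m) is too, hence m = 1
    have hm1 : m = 1 := by
      by_contra hm1
      have h2 : ∃ X Y : Gl m hm, X * Y ≠ Y * X := (nonabelian_iff m hm).mpr hm1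
      have h3 := nonab_transfer (GrpAux.sut_symm h) h2
      rw [nonabelian_iff l hl] at h3
      exact h3 hl1
    subst hl1; subst hm1
    exact Or.inr ⟨isIntegral_one.isAlgebraic, isIntegral_one.isAlgebraic, Or.inl rfl⟩
  by_cases hm1 : m = 1
  · exfalso
    apply hl1
    subst hm1
    by_contra hl1'
    have h2 : ∃ X Y : Gl l hl, X * Y ≠ Y * X := (nonabelian_iff l hl).mpr hl1'
    have h3 := nonab_transfer h h2
    rw [nonabelian_iff 1 hm] at h3
    exact h3 rfl
  by_cases hla : IsAlgebraic ℚ l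
  · obtain ⟨k, hk1, hk0⟩ := alg_step l m hl hm hl1 h hla
    have hmalg : IsAlgebraic ℚ m := by
      have hk0' : k ≠ 0 := by rintro rfl; exact hk1 (by simp)
      exact alg_of_zpow hk0'
        ⟨minpoly ℚ l, minpoly.ne_zero (isAlgebraic_iff_isIntegral.mp hla), hk0⟩
    obtain ⟨k', hk1', hk0'⟩ := alg_step m l hm hl hm1 (GrpAux.sut_symm h) hmalg
    exact Or.inr ⟨hla, hmalg, NumAux.minpoly_conclude hl hm
      (isAlgebraic_iff_isIntegral.mp hla) (isAlgebraic_iff_isIntegral.mp hmalg)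
      hk1 hk1' hk0 hk0'⟩
  · have hma : ¬ IsAlgebraic ℚ m := by
      intro hma
      obtain ⟨k', hk1', hk0'⟩ := alg_step m l hm hl hm1 (GrpAux.sut_symm h) hma
      apply hla
      have hk0'' : k' ≠ 0 := by rintro rfl; exact hk1' (by simp)
      exact alg_of_zpow hk0''
        ⟨minpoly ℚ m, minpoly.ne_zero (isAlgebraic_iff_isIntegral.mp hma), hk0'⟩
    exact Or.inl ⟨hla, hma⟩

theorem backward (l m : ℂ) (hl : l ≠ 0) (hm : m ≠ 0)
    (H : (Transcendental ℚ l ∧ Transcendental ℚ m) ∨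
      (IsAlgebraic ℚ l ∧ IsAlgebraic ℚ m ∧
        (minpoly ℚ l = minpoly ℚ m ∨ minpoly ℚ l = minpoly ℚ m⁻¹))) :
    SameUniversalTheory (Gl l hl) (Gl m hm) := by
  rcases H with ⟨htl, htm⟩ | ⟨hal, ham, heq | heq⟩
  · have hker := RingAux.lev_ker_eq l m hl hm (Or.inl ⟨htl, htm⟩)
    exact GrpAux.sut_of_mulEquiv
      (GrpAux.sdpCongr (RingAux.rringEquiv l m hl hm hker)
        (RingAux.rringEquiv_runit l m hl hm hker))
  · have hker := RingAux.lev_ker_eq l m hl hm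
      (Or.inr ⟨isAlgebraic_iff_isIntegral.mp hal, isAlgebraic_iff_isIntegral.mp ham, heq⟩)
    exact GrpAux.sut_of_mulEquiv
      (GrpAux.sdpCongr (RingAux.rringEquiv l m hl hm hker)
        (RingAux.rringEquiv_runit l m hl hm hker))
  · have hm' : m⁻¹ ≠ 0 := inv_ne_zero hm
    have hmi' : IsIntegral ℚ m⁻¹ :=
      isAlgebraic_iff_isIntegral.mp (IsAlgebraic.inv_iff.mpr ham)
    have hker := RingAux.lev_ker_eq l m⁻¹ hl hm'
      (Or.inr ⟨isAlgebraic_iff_isIntegral.mp hal, hmi', heq⟩)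
    have e1 : Gl l hl ≃* Gl m⁻¹ (inv_ne_zero hm) :=
      GrpAux.sdpCongr (RingAux.rringEquiv l m⁻¹ hl hm' hker)
        (RingAux.rringEquiv_runit l m⁻¹ hl hm' hker)
    exact GrpAux.sut_of_mulEquiv (e1.trans (GrpAux.glFlipEquiv m hm).symm)

end MainAux

/-- `G(λ)` and `G(μ)` have the same universal theory if and only if `λ` and `μ` are both
transcendental over `ℚ`, or both are algebraic over `ℚ` and `λ` has the same minimal
polynomial over `ℚ` as `μ` or as `μ⁻¹`. -/
theorem sameUniversalTheory_Gl_iff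
    (l m : ℂ) (hl : l ≠ 0) (hm : m ≠ 0) :
    SameUniversalTheory (Gl l hl) (Gl m hm) ↔
      (Transcendental ℚ l ∧ Transcendental ℚ m) ∨
      (IsAlgebraic ℚ l ∧ IsAlgebraic ℚ m ∧
        (minpoly ℚ l = minpoly ℚ m ∨ minpoly ℚ l = minpoly ℚ m⁻¹)) := by
  constructor
  · exact MainAux.forward l m hl hm
  · exact MainAux.backward l m hl hm
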